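/- arXiv:1005.1355 — 3 statements merged into one kernel-verified Lean document; each statement's English description precedes it below -/
import Mathlib

section
/- In ℂ[X,Y,Z], the quartic of QL-configuration type (11) decomposes as a (2,3) torus curve: the polynomial (X² + Y²)² + t·X³·Z equals F₂(X,Y,Z)² + F₁(X,Y,Z)³·Z with F₂ = X² + Y² and F₁ = t^{1/3}·X, and the curve {(X²+Y²)² + tX³Z = 0} has an e₆ singularity at [0:0:1] for every t ≠ 0. -/
open MvPolynomial

/-- Two plane curve germs at the origin of ℂ² (given as zero sets of functions)
are topologically equivalent: there is a local homeomorphism at the origin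
carrying one zero set onto the other. -/
def GermTopEquiv (f g : ℂ × ℂ → ℂ) : Prop :=
  ∃ (U V : Set (ℂ × ℂ)) (_ : IsOpen U) (_ : IsOpen V) (h0U : (0 : ℂ × ℂ) ∈ U)
    (_ : (0 : ℂ × ℂ) ∈ V) (φ : U ≃ₜ V),
      ((φ ⟨0, h0U⟩ : ℂ × ℂ) = 0) ∧ ∀ p : U, f p = 0 ↔ g (φ p) = 0

noncomputable def X0 : MvPolynomial (Fin 3) ℂ := X 0
noncomputable def X1 : MvPolynomial (Fin 3) ℂ := X 1
noncomputable def X2 : MvPolynomial (Fin 3) ℂ := X 2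

/- Auxiliary definitions for the germ equivalence: the analytic change of
coordinates realizing `(x²+y²)² + t x³ = X³ + Y⁴` with
`X = (x + 2y²/(3t)) · W^{1/3} · u`, `Y = y · V^{1/4}`. -/

noncomputable def Wf (t : ℂ) : ℂ × ℂ → ℂ :=
  fun p => 1 + t⁻¹ * p.1 - 2 * (t ^ 2)⁻¹ * (p.2 * p.2)

noncomputable def Vf (t : ℂ) : ℂ × ℂ → ℂ :=
  fun p => 1 - 4 * (3 * t)⁻¹ * p.1 + 8 * (3 * t ^ 2)⁻¹ * (p.1 * p.1)
    - 8 * (27 * t ^ 2)⁻¹ * (p.2 * p.2) + 64 * (27 * t ^ 3)⁻¹ * (p.1 * (p.2 * p.2))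
    + 16 * (27 * t ^ 4)⁻¹ * ((p.2 * p.2) * (p.2 * p.2))

noncomputable def B1 (t : ℂ) : ℂ × ℂ → ℂ := fun p => Wf t p ^ (((3 : ℕ) : ℂ))⁻¹
noncomputable def B2 (t : ℂ) : ℂ × ℂ → ℂ := fun p => Vf t p ^ (((4 : ℕ) : ℂ))⁻¹

noncomputable def phi (t u : ℂ) : ℂ × ℂ → ℂ × ℂ :=
  fun p => ((p.1 + 2 * (3 * t)⁻¹ * (p.2 * p.2)) * B1 t p * u, p.2 * B2 t p)

lemma key_identity (t u : ℂ) (ht : t ≠ 0) (hu : u ^ 3 = t) (p : ℂ × ℂ) :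
    (phi t u p).1 ^ 3 + (phi t u p).2 ^ 4 =
      (p.1 ^ 2 + p.2 ^ 2) ^ 2 + t * p.1 ^ 3 := by
  have h3 : (B1 t p) ^ (3 : ℕ) = Wf t p := Complex.cpow_nat_inv_pow _ (by norm_num)
  have h4 : (B2 t p) ^ (4 : ℕ) = Vf t p := Complex.cpow_nat_inv_pow _ (by norm_num)
  have e1 : (phi t u p).1 ^ 3 =
      (p.1 + 2 * (3 * t)⁻¹ * (p.2 * p.2)) ^ 3 * ((B1 t p) ^ (3:ℕ)) * u ^ 3 := by
    simp only [phi]; ring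
  have e2 : (phi t u p).2 ^ 4 = p.2 ^ 4 * ((B2 t p) ^ (4:ℕ)) := by
    simp only [phi]; ring
  rw [e1, e2, h3, h4, hu, Wf, Vf]
  have h : t * t⁻¹ = 1 := mul_inv_cancel₀ ht
  simp only [mul_inv, ← inv_pow]
  linear_combination ((8/27 : ℂ) * p.2 ^ 6 * t⁻¹ ^ 2 + (-16/27 : ℂ) * p.2 ^ 8 * t⁻¹ ^ 4
    + (4/3 : ℂ) * p.1 * p.2 ^ 4 * t⁻¹ + (-64/27 : ℂ) * p.1 * p.2 ^ 6 * t⁻¹ ^ 3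
    + (2 : ℂ) * p.1 ^ 2 * p.2 ^ 2 + (-8/3 : ℂ) * p.1 ^ 2 * p.2 ^ 4 * t⁻¹ ^ 2 + p.1 ^ 4) * h

lemma Wf_zero (t : ℂ) : Wf t 0 = 1 := by simp [Wf]

lemma Vf_zero (t : ℂ) : Vf t 0 = 1 := by simp [Vf]

lemma B1_zero (t : ℂ) : B1 t 0 = 1 := by
  simp [B1, Wf_zero, Complex.one_cpow]

lemma B2_zero (t : ℂ) : B2 t 0 = 1 := by
  simp [B2, Vf_zero, Complex.one_cpow]

lemma phi_zero (t u : ℂ) : phi t u 0 = 0 := by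
  simp [phi]

lemma B1_analytic (t : ℂ) : AnalyticAt ℂ (B1 t) 0 := by
  have hW : AnalyticAt ℂ (Wf t) 0 := by
    unfold Wf
    exact (analyticAt_const.add (analyticAt_const.mul analyticAt_fst)).sub
      ((analyticAt_const.mul (analyticAt_snd.mul analyticAt_snd)))
  exact hW.cpow analyticAt_const (by rw [Wf_zero]; exact Complex.one_mem_slitPlane)

lemma B2_analytic (t : ℂ) : AnalyticAt ℂ (B2 t) 0 := by
  have hV : AnalyticAt ℂ (Vf t) 0 := by
    unfold Vf
    exact (((((analyticAt_const.sub
      (analyticAt_const.mul analyticAt_fst)).add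
      (analyticAt_const.mul (analyticAt_fst.mul analyticAt_fst))).sub
      (analyticAt_const.mul (analyticAt_snd.mul analyticAt_snd))).add
      (analyticAt_const.mul (analyticAt_fst.mul (analyticAt_snd.mul analyticAt_snd))))).add
      (analyticAt_const.mul ((analyticAt_snd.mul analyticAt_snd).mul
        (analyticAt_snd.mul analyticAt_snd)))
  exact hV.cpow analyticAt_const (by rw [Vf_zero]; exact Complex.one_mem_slitPlane)

/-- the quartic of QL-configuration type (11) is a (2,3) torus
curve, (X²+Y²)² + tX³Z = F₂² + F₁³Z with F₂ = X²+Y², F₁ = t^{1/3}X, and in the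
affine chart at [0:0:1] it has an e₆ singularity (germ equivalent to x³ + y⁴)
at the origin, for every t ≠ 0. -/
theorem stmt8 (t u : ℂ) (ht : t ≠ 0) (hu : u ^ 3 = t) :
    ((X0 ^ 2 + X1 ^ 2) ^ 2 + C t * X0 ^ 3 * X2 =
      (X0 ^ 2 + X1 ^ 2) ^ 2 + (C u * X0) ^ 3 * X2) ∧
    GermTopEquiv (fun p => (p.1 ^ 2 + p.2 ^ 2) ^ 2 + t * p.1 ^ 3)
      (fun p => p.1 ^ 3 + p.2 ^ 4) := by
  have hu0 : u ≠ 0 := by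
    intro h; exact ht (by rw [← hu, h]; ring)
  constructor
  · rw [mul_pow, ← map_pow, hu]
  · -- the strict derivative of phi at 0
    have hB1s := (B1_analytic t).hasStrictFDerivAt
    have hB2s := (B2_analytic t).hasStrictFDerivAt
    have ha : HasStrictFDerivAt (fun p : ℂ × ℂ => p.1 + 2 * (3 * t)⁻¹ * (p.2 * p.2))
        (ContinuousLinearMap.fst ℂ ℂ ℂ +
          (2 * (3 * t)⁻¹) • ((0 : ℂ × ℂ).2 • ContinuousLinearMap.snd ℂ ℂ ℂ +
            (0 : ℂ × ℂ).2 • ContinuousLinearMap.snd ℂ ℂ ℂ)) 0 :=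
      hasStrictFDerivAt_fst.add
        ((hasStrictFDerivAt_snd.mul hasStrictFDerivAt_snd).const_mul (2 * (3 * t)⁻¹))
    have hphi1 := (ha.mul hB1s).mul_const u
    have hphi2 := hasStrictFDerivAt_snd.mul hB2s
    have hraw := HasStrictFDerivAt.prodMk hphi1 hphi2
    -- the invertible linear map
    set Lu : (ℂ × ℂ) ≃L[ℂ] (ℂ × ℂ) :=
      (ContinuousLinearEquiv.unitsEquivAut ℂ (Units.mk0 u hu0)).prodCongr
        (ContinuousLinearEquiv.refl ℂ ℂ) with hLu
    have hphis : HasStrictFDerivAt (phi t u) (Lu : (ℂ × ℂ) →L[ℂ] (ℂ × ℂ)) 0 := by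
      refine (HasStrictFDerivAt.congr_fderiv hraw ?_ : HasStrictFDerivAt (phi t u) _ 0)
      refine ContinuousLinearMap.ext fun v => ?_
      simp [hLu, B1_zero, B2_zero, ContinuousLinearEquiv.prodCongr_apply,
        ContinuousLinearEquiv.unitsEquivAut_apply, smul_eq_mul, Prod.map,
        mul_comm]
    have h0U := HasStrictFDerivAt.mem_toOpenPartialHomeomorph_source (f := phi t u) hphis
    set e := HasStrictFDerivAt.toOpenPartialHomeomorph (phi t u) hphis with he
    have hecoe : (e : ℂ × ℂ → ℂ × ℂ) = phi t u := rfl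
    have h0V : (0 : ℂ × ℂ) ∈ e.target := by
      have := e.map_source h0U
      rwa [show e 0 = 0 by rw [show e 0 = phi t u 0 from rfl, phi_zero]] at this
    refine ⟨e.source, e.target, e.open_source, e.open_target, h0U, h0V,
      e.toHomeomorphSourceTarget, ?_, ?_⟩
    · rw [show ((e.toHomeomorphSourceTarget ⟨0, h0U⟩ : e.target) : ℂ × ℂ) = e 0 from
        OpenPartialHomeomorph.toHomeomorphSourceTarget_apply_coe e ⟨0, h0U⟩]
      rw [show e 0 = phi t u 0 from rfl, phi_zero]
    · intro p
      rw [show ((e.toHomeomorphSourceTarget p : e.target) : ℂ × ℂ) = e p from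
        OpenPartialHomeomorph.toHomeomorphSourceTarget_apply_coe e p]
      rw [show e (p : ℂ × ℂ) = phi t u p from rfl]
      simp only []
      rw [key_identity t u ht hu]
end

section
/- Let g(u,v) = v² + (c₁v − φ₁(u))³·(c₂v − φ₂(u)) ∈ ℂ{u,v} with c₁, c₂ ≠ 0, ord φ₁ = ι₁ ∈ {1,2}, ord φ₂ = ι₂ ∈ {1,2}. Then the germ {g = 0} at the origin is topologically equivalent to the singularity a_{3ι₁+ι₂−1}: v² − u^{3ι₁+ι₂} = 0. -/
namespace Stmt10Aux

open Polynomial Set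

@[fun_prop]
theorem polyeval_contDiff (p : Polynomial ℂ) {n : WithTop ℕ∞} :
    ContDiff ℂ n fun x : ℂ => p.eval x := by
  induction p using Polynomial.induction_on' with
  | add p q hp hq => simpa using hp.add hq
  | monomial k a => simpa [Polynomial.eval_monomial] using contDiff_const.mul (contDiff_id.pow k)

theorem germTopEquiv_congr {f f' g g' : ℂ × ℂ → ℂ} (hf : ∀ p, f p = f' p)
    (hg : ∀ p, g p = g' p) (h : GermTopEquiv f' g') : GermTopEquiv f g := by
  obtain ⟨U, V, hU, hV, h0U, h0V, φ, hφ0, hiff⟩ := h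
  exact ⟨U, V, hU, hV, h0U, h0V, φ, hφ0, fun p => by rw [hf, hg]; exact hiff p⟩

/-- product of two functions vanishing at a point is strictly differentiable
with zero derivative. -/
theorem hasStrictFDerivAt_mul_zero {E : Type*} [NormedAddCommGroup E] [NormedSpace ℂ E]
    {f g : E → ℂ} {p : E} (hf : ContDiffAt ℂ 1 f p) (hg : ContDiffAt ℂ 1 g p)
    (h0f : f p = 0) (h0g : g p = 0) :
    HasStrictFDerivAt (fun x => f x * g x) (0 : E →L[ℂ] ℂ) p := by
  have Hf := hf.hasStrictFDerivAt one_ne_zero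
  have Hg := hg.hasStrictFDerivAt one_ne_zero
  refine (Hf.mul Hg).congr_fderiv ?_
  ext x
  simp [h0f, h0g]

/-- triangular linear automorphism of ℂ³, an involution. -/
noncomputable def trigLE (γ₁ γ₂ : ℂ) : (ℂ × ℂ × ℂ) ≃ₗ[ℂ] (ℂ × ℂ × ℂ) where
  toFun q := (q.1, γ₁ * q.1 - q.2.1, γ₂ * q.1 - q.2.2)
  invFun q := (q.1, γ₁ * q.1 - q.2.1, γ₂ * q.1 - q.2.2)
  map_add' a b := by simp [Prod.ext_iff]; constructor <;> ring
  map_smul' c a := by simp [Prod.ext_iff, smul_eq_mul]; constructor <;> ring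
  left_inv q := by simp [Prod.ext_iff]
  right_inv q := by simp [Prod.ext_iff]

/-- shear-scale linear automorphism of ℂ². -/
noncomputable def shearLE (w δ : ℂ) (hw : w ≠ 0) : (ℂ × ℂ) ≃ₗ[ℂ] (ℂ × ℂ) where
  toFun q := (w * q.1, q.2 + δ * q.1)
  invFun q := (w⁻¹ * q.1, q.2 - δ * (w⁻¹ * q.1))
  map_add' a b := by simp [Prod.ext_iff]; constructor <;> ring
  map_smul' c a := by simp [Prod.ext_iff, smul_eq_mul]; constructor <;> ring
  left_inv q := by refine Prod.ext ?_ ?_ <;> simp [hw]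
  right_inv q := by simp [Prod.ext_iff]; field_simp

section Core

variable (a₄ : ℂ) (P3 P2 P1 P0 : Polynomial ℂ) (d e : ℕ)

/-- first (rescaled) remainder equation -/
noncomputable def eqA (u B C : ℂ) : ℂ :=
  a₄ * (2 * (u^d * u^d * u^e) * B * C - (u^d * u^e)^2 * B^3)
    + P3.eval u * ((u^d * u^e) * B^2 - u^d * C) - (1 + P2.eval u) * B + P1.eval u

/-- second (rescaled) remainder equation -/
noncomputable def eqB (u B C : ℂ) : ℂ :=
  a₄ * ((u^d * u^d * u^e) * C^2 - (u^d * u^e)^2 * B^2 * C)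
    + P3.eval u * (u^d * u^e) * B * C - (1 + P2.eval u) * C + P0.eval u

/-- the auxiliary map ℂ³ → ℂ³ whose local inverse provides the quadratic factor -/
noncomputable def Fm (p : ℂ × ℂ × ℂ) : ℂ × ℂ × ℂ :=
  (p.1, eqA a₄ P3 P2 P1 d e p.1 p.2.1 p.2.2, eqB a₄ P3 P2 P0 d e p.1 p.2.1 p.2.2)

theorem core (hd : d ≠ 0) (he : e ≠ 0)
    (h3 : P3.eval 0 = 0) (h2 : P2.eval 0 = 0) (h0 : P0.eval 0 ≠ 0) :
    GermTopEquiv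
      (fun p => a₄ * p.2^4 + P3.eval p.1 * p.2^3 + (1 + P2.eval p.1) * p.2^2
        + p.1^(d+e) * P1.eval p.1 * p.2 + p.1^(2*d+e) * P0.eval p.1)
      (fun p => p.2^2 - p.1^(2*d+e)) := by
  classical
  set B₀ : ℂ := P1.eval 0 with hB₀
  set C₀ : ℂ := P0.eval 0 with hC₀
  set p₀ : ℂ × ℂ × ℂ := (0, B₀, C₀) with hp₀
  -- ## Step 1: strict derivative of Fm at p₀
  have hFm_cd : ∀ q, ContDiffAt ℂ 1 (Fm a₄ P3 P2 P1 P0 d e) q := by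
    intro q
    unfold Fm eqA eqB
    fun_prop
  set h1 : ℂ → ℂ := fun u => eqA a₄ P3 P2 P1 d e u B₀ C₀ with hh1
  set h2f : ℂ → ℂ := fun u => eqB a₄ P3 P2 P0 d e u B₀ C₀ with hh2f
  have h1cd : ContDiffAt ℂ 1 h1 0 := by rw [hh1]; unfold eqA; fun_prop
  have h2cd : ContDiffAt ℂ 1 h2f 0 := by rw [hh2f]; unfold eqB; fun_prop
  set γ₁ : ℂ := deriv h1 0 with hγ₁
  set γ₂ : ℂ := deriv h2f 0 with hγ₂
  set L := (trigLE γ₁ γ₂).toContinuousLinearEquiv with hL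
  have HFs : HasStrictFDerivAt (Fm a₄ P3 P2 P1 P0 d e)
      (L : (ℂ × ℂ × ℂ) →L[ℂ] (ℂ × ℂ × ℂ)) p₀ := by
    have Hh1 : HasStrictDerivAt h1 γ₁ 0 := h1cd.hasStrictDerivAt one_ne_zero
    have Hh2 : HasStrictDerivAt h2f γ₂ 0 := h2cd.hasStrictDerivAt one_ne_zero
    -- projections
    have hfst : HasStrictFDerivAt (fun p : ℂ × ℂ × ℂ => p.1)
        (ContinuousLinearMap.fst ℂ ℂ (ℂ × ℂ)) p₀ := hasStrictFDerivAt_fst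
    have hsnd1 : HasStrictFDerivAt (fun p : ℂ × ℂ × ℂ => p.2.1)
        ((ContinuousLinearMap.fst ℂ ℂ ℂ).comp (ContinuousLinearMap.snd ℂ ℂ (ℂ × ℂ))) p₀ :=
      hasStrictFDerivAt_fst.comp p₀ hasStrictFDerivAt_snd
    have hsnd2 : HasStrictFDerivAt (fun p : ℂ × ℂ × ℂ => p.2.2)
        ((ContinuousLinearMap.snd ℂ ℂ ℂ).comp (ContinuousLinearMap.snd ℂ ℂ (ℂ × ℂ))) p₀ :=
      hasStrictFDerivAt_snd.comp p₀ hasStrictFDerivAt_snd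
    -- the doubly-vanishing parts
    have hD1 : HasStrictFDerivAt (fun p : ℂ × ℂ × ℂ =>
        p.1^(2*d+e) * (a₄ * 2 * (p.2.1 * p.2.2 - B₀ * C₀))
        + p.1^(2*d+2*e) * (-(a₄ * (p.2.1^3 - B₀^3)))
        + P3.eval p.1 * ((p.1^d * p.1^e * p.2.1^2 - p.1^d * p.2.2)
            - (p.1^d * p.1^e * B₀^2 - p.1^d * C₀))
        + P2.eval p.1 * (-(p.2.1 - B₀))) (0 : (ℂ × ℂ × ℂ) →L[ℂ] ℂ) p₀ := by
      have t1 := hasStrictFDerivAt_mul_zero (E := ℂ × ℂ × ℂ)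
        (f := fun p => p.1^(2*d+e)) (g := fun p => a₄ * 2 * (p.2.1 * p.2.2 - B₀ * C₀))
        (p := p₀) (by fun_prop) (by fun_prop)
        (by simp [hp₀, zero_pow (by omega : 2*d+e ≠ 0)]) (by simp [hp₀])
      have t2 := hasStrictFDerivAt_mul_zero (E := ℂ × ℂ × ℂ)
        (f := fun p => p.1^(2*d+2*e)) (g := fun p => -(a₄ * (p.2.1^3 - B₀^3)))
        (p := p₀) (by fun_prop) (by fun_prop)
        (by simp [hp₀, zero_pow (by omega : 2*d+2*e ≠ 0)]) (by simp [hp₀])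
      have t3 := hasStrictFDerivAt_mul_zero (E := ℂ × ℂ × ℂ)
        (f := fun p => P3.eval p.1)
        (g := fun p => (p.1^d * p.1^e * p.2.1^2 - p.1^d * p.2.2)
            - (p.1^d * p.1^e * B₀^2 - p.1^d * C₀))
        (p := p₀) (by fun_prop) (by fun_prop)
        (by simp [hp₀, h3]) (by simp [hp₀, zero_pow hd])
      have t4 := hasStrictFDerivAt_mul_zero (E := ℂ × ℂ × ℂ)
        (f := fun p => P2.eval p.1) (g := fun p => -(p.2.1 - B₀))
        (p := p₀) (by fun_prop) (by fun_prop)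
        (by simp [hp₀, h2]) (by simp [hp₀])
      refine (((t1.add t2).add t3).add t4).congr_fderiv ?_
      apply ContinuousLinearMap.ext; intro x; simp
    have hD2 : HasStrictFDerivAt (fun p : ℂ × ℂ × ℂ =>
        p.1^(2*d+e) * (a₄ * (p.2.2^2 - C₀^2))
        + p.1^(2*d+2*e) * (-(a₄ * (p.2.1^2 * p.2.2 - B₀^2 * C₀)))
        + P3.eval p.1 * (p.1^d * p.1^e * (p.2.1 * p.2.2 - B₀ * C₀))
        + P2.eval p.1 * (-(p.2.2 - C₀))) (0 : (ℂ × ℂ × ℂ) →L[ℂ] ℂ) p₀ := by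
      have t1 := hasStrictFDerivAt_mul_zero (E := ℂ × ℂ × ℂ)
        (f := fun p => p.1^(2*d+e)) (g := fun p => a₄ * (p.2.2^2 - C₀^2))
        (p := p₀) (by fun_prop) (by fun_prop)
        (by simp [hp₀, zero_pow (by omega : 2*d+e ≠ 0)]) (by simp [hp₀])
      have t2 := hasStrictFDerivAt_mul_zero (E := ℂ × ℂ × ℂ)
        (f := fun p => p.1^(2*d+2*e)) (g := fun p => -(a₄ * (p.2.1^2 * p.2.2 - B₀^2 * C₀)))
        (p := p₀) (by fun_prop) (by fun_prop)
        (by simp [hp₀, zero_pow (by omega : 2*d+2*e ≠ 0)]) (by simp [hp₀])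
      have t3 := hasStrictFDerivAt_mul_zero (E := ℂ × ℂ × ℂ)
        (f := fun p => P3.eval p.1)
        (g := fun p => p.1^d * p.1^e * (p.2.1 * p.2.2 - B₀ * C₀))
        (p := p₀) (by fun_prop) (by fun_prop)
        (by simp [hp₀, h3]) (by simp [hp₀, zero_pow hd])
      have t4 := hasStrictFDerivAt_mul_zero (E := ℂ × ℂ × ℂ)
        (f := fun p => P2.eval p.1) (g := fun p => -(p.2.2 - C₀))
        (p := p₀) (by fun_prop) (by fun_prop)
        (by simp [hp₀, h2]) (by simp [hp₀])
      refine (((t1.add t2).add t3).add t4).congr_fderiv ?_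
      apply ContinuousLinearMap.ext; intro x; simp
    have Hc2 := ((Hh1.hasStrictFDerivAt.comp p₀ hfst).sub (hsnd1.sub_const B₀)).add hD1
    have Hc3 := ((Hh2.hasStrictFDerivAt.comp p₀ hfst).sub (hsnd2.sub_const C₀)).add hD2
    have Htot := hfst.prodMk (Hc2.prodMk Hc3)
    have hfun : (Fm a₄ P3 P2 P1 P0 d e) = fun p : ℂ × ℂ × ℂ =>
        (p.1, (fun p : ℂ × ℂ × ℂ => h1 p.1 - (p.2.1 - B₀)
          + ((fun p : ℂ × ℂ × ℂ =>
            p.1^(2*d+e) * (a₄ * 2 * (p.2.1 * p.2.2 - B₀ * C₀))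
            + p.1^(2*d+2*e) * (-(a₄ * (p.2.1^3 - B₀^3)))
            + P3.eval p.1 * ((p.1^d * p.1^e * p.2.1^2 - p.1^d * p.2.2)
                - (p.1^d * p.1^e * B₀^2 - p.1^d * C₀))
            + P2.eval p.1 * (-(p.2.1 - B₀))) p)) p,
         (fun p : ℂ × ℂ × ℂ => h2f p.1 - (p.2.2 - C₀)
          + ((fun p : ℂ × ℂ × ℂ =>
            p.1^(2*d+e) * (a₄ * (p.2.2^2 - C₀^2))
            + p.1^(2*d+2*e) * (-(a₄ * (p.2.1^2 * p.2.2 - B₀^2 * C₀)))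
            + P3.eval p.1 * (p.1^d * p.1^e * (p.2.1 * p.2.2 - B₀ * C₀))
            + P2.eval p.1 * (-(p.2.2 - C₀))) p)) p) := by
      funext p
      simp only [Fm, eqA, eqB, hh1, hh2f, Prod.mk.injEq, true_and]
      constructor
      · simp only [two_mul, pow_add]; ring
      · simp only [two_mul, pow_add]; ring
    rw [hfun]
    refine Htot.congr_fderiv ?_
    apply ContinuousLinearMap.ext
    intro q
    simp [hL, trigLE, Prod.ext_iff]
    constructor <;> ring
  -- ## Step 2: the local inverse of Fm and the coefficient functions B, C
  set eH := HFs.toOpenPartialHomeomorph _ with heH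
  have heH_coe : (eH : ℂ × ℂ × ℂ → ℂ × ℂ × ℂ) = Fm a₄ P3 P2 P1 P0 d e :=
    HFs.toOpenPartialHomeomorph_coe
  have hp₀src : p₀ ∈ eH.source := HFs.mem_toOpenPartialHomeomorph_source
  have hFp₀ : Fm a₄ P3 P2 P1 P0 d e p₀ = (0, 0, 0) := by
    have e1 : eqA a₄ P3 P2 P1 d e 0 B₀ C₀ = 0 := by
      simp [eqA, zero_pow hd, zero_pow he, h3, h2, hB₀]
    have e2 : eqB a₄ P3 P2 P0 d e 0 B₀ C₀ = 0 := by
      simp [eqB, zero_pow hd, zero_pow he, h3, h2, hC₀]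
    simp [Fm, hp₀, e1, e2]
  have htar : ((0, 0, 0) : ℂ × ℂ × ℂ) ∈ eH.target := by
    rw [← hFp₀]
    exact HFs.image_mem_toOpenPartialHomeomorph_target
  set σ : ℂ → ℂ × ℂ × ℂ := fun u => eH.symm (u, 0, 0) with hσ
  set Bf : ℂ → ℂ := fun u => (σ u).2.1 with hBf
  set Cf : ℂ → ℂ := fun u => (σ u).2.2 with hCf
  have hσ0 : σ 0 = p₀ := by
    have h := eH.left_inv hp₀src
    have : eH p₀ = (0, 0, 0) := by rw [← hFp₀, heH_coe]
    rw [this] at h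
    simpa [hσ] using h
  have hB0 : Bf 0 = B₀ := by simp [hBf, hσ0, hp₀]
  have hC0 : Cf 0 = C₀ := by simp [hCf, hσ0, hp₀]
  have hsymm_cd : ContDiffAt ℂ 1 eH.symm (0, 0, 0) := by
    apply eH.contDiffAt_symm htar (f₀' := L)
    · have : eH.symm (0, 0, 0) = p₀ := by
        have h := eH.left_inv hp₀src
        have h2 : eH p₀ = (0, 0, 0) := by rw [← hFp₀, heH_coe]
        rwa [h2] at h
      rw [this, heH_coe]
      exact HFs.hasFDerivAt
    · rw [heH_coe]
      have : eH.symm (0, 0, 0) = p₀ := by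
        have h := eH.left_inv hp₀src
        have h2 : eH p₀ = (0, 0, 0) := by rw [← hFp₀, heH_coe]
        rwa [h2] at h
      rw [this]
      exact hFm_cd p₀
  have hσcd : ContDiffAt ℂ 1 σ 0 := by
    have hlin : ContDiffAt ℂ 1 (fun u : ℂ => ((u, 0, 0) : ℂ × ℂ × ℂ)) 0 := by fun_prop
    exact ContDiffAt.comp (f := fun u : ℂ => ((u, 0, 0) : ℂ × ℂ × ℂ)) (g := eH.symm)
      0 hsymm_cd hlin
  have hBcd : ContDiffAt ℂ 1 Bf 0 := by
    have : ContDiffAt ℂ 1 (fun q : ℂ × ℂ × ℂ => q.2.1) (σ 0) := by fun_prop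
    exact this.comp 0 hσcd
  have hCcd : ContDiffAt ℂ 1 Cf 0 := by
    have : ContDiffAt ℂ 1 (fun q : ℂ × ℂ × ℂ => q.2.2) (σ 0) := by fun_prop
    exact this.comp 0 hσcd
  -- the good parameter set T
  set T : Set ℂ := (fun u : ℂ => ((u, 0, 0) : ℂ × ℂ × ℂ)) ⁻¹' eH.target with hT
  have hTopen : IsOpen T := eH.open_target.preimage (by fun_prop)
  have h0T : (0 : ℂ) ∈ T := htar
  have hσcont : ContinuousOn σ T := by
    apply eH.continuousOn_symm.comp (by fun_prop : Continuous
      (fun u : ℂ => ((u, 0, 0) : ℂ × ℂ × ℂ))).continuousOn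
    exact fun u hu => hu
  have hFσ : ∀ u ∈ T, Fm a₄ P3 P2 P1 P0 d e (σ u) = (u, 0, 0) := by
    intro u hu
    have h := eH.right_inv hu
    rwa [heH_coe] at h
  have hσ1 : ∀ u ∈ T, (σ u).1 = u := by
    intro u hu
    have h := congrArg Prod.fst (hFσ u hu)
    simpa [Fm] using h
  have heqA : ∀ u ∈ T, eqA a₄ P3 P2 P1 d e u (Bf u) (Cf u) = 0 := by
    intro u hu
    have h := congrArg (fun q : ℂ × ℂ × ℂ => q.2.1) (hFσ u hu)
    simp only [Fm] at h
    rw [hσ1 u hu] at h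
    exact h
  have heqB : ∀ u ∈ T, eqB a₄ P3 P2 P0 d e u (Bf u) (Cf u) = 0 := by
    intro u hu
    have h := congrArg (fun q : ℂ × ℂ × ℂ => q.2.2) (hFσ u hu)
    simp only [Fm] at h
    rw [hσ1 u hu] at h
    exact h
  -- ## Step 3: the discriminant unit and its (2d+e)-th root
  set Ev : ℂ → ℂ := fun u => u^e * (Bf u)^2 - 4 * Cf u with hEv
  have hEv0 : Ev 0 = -(4 * C₀) := by
    simp [hEv, hB0, hC0, zero_pow he]
  have hζ : Ev 0 / 4 ≠ 0 := by
    have hval : Ev 0 / 4 = -C₀ := by rw [hEv0]; ring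
    rw [hval]
    exact neg_ne_zero.mpr h0
  obtain ⟨w₀, hw₀⟩ : ∃ w : ℂ, w^(2*d+e) = Ev 0 / 4 :=
    IsAlgClosed.exists_pow_nat_eq _ (by omega)
  have hw₀ne : w₀ ≠ 0 := by
    intro h
    apply hζ
    rw [← hw₀, h, zero_pow (by omega : 2*d+e ≠ 0)]
  have hpow : HasStrictDerivAt (fun z : ℂ => z^(2*d+e))
      ((2*d+e : ℕ) * w₀^(2*d+e-1)) w₀ := hasStrictDerivAt_pow _ _
  have hpowne : ((2*d+e : ℕ) : ℂ) * w₀^(2*d+e-1) ≠ 0 :=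
    mul_ne_zero (Nat.cast_ne_zero.mpr (by omega)) (pow_ne_zero _ hw₀ne)
  set pf := hpow.hasStrictFDerivAt_equiv hpowne with hpf
  set pe := pf.toOpenPartialHomeomorph _ with hpe
  have hpe_coe : (pe : ℂ → ℂ) = fun z : ℂ => z^(2*d+e) := pf.toOpenPartialHomeomorph_coe
  have hw₀src : w₀ ∈ pe.source := pf.mem_toOpenPartialHomeomorph_source
  have hζtar : Ev 0 / 4 ∈ pe.target := by
    rw [← hw₀]
    have h := pf.image_mem_toOpenPartialHomeomorph_target
    exact h
  set ρ : ℂ → ℂ := fun u => pe.symm (Ev u / 4) with hρ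
  have hpew₀ : pe w₀ = Ev 0 / 4 := by rw [hpe_coe]; exact hw₀
  have hsymζ : pe.symm (Ev 0 / 4) = w₀ := by
    rw [← hpew₀]
    exact pe.left_inv hw₀src
  have hρ0 : ρ 0 = w₀ := hsymζ
  have hEvcd : ContDiffAt ℂ 1 (fun u => Ev u / 4) 0 := by
    apply ContDiffAt.div_const
    rw [hEv]
    exact ((contDiffAt_id.pow e).mul (hBcd.pow 2)).sub (contDiffAt_const.mul hCcd)
  have hρcd : ContDiffAt ℂ 1 ρ 0 := by
    have hsym : ContDiffAt ℂ 1 pe.symm (Ev 0 / 4) := by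
      apply pe.contDiffAt_symm_deriv hpowne hζtar
      · rw [hsymζ, hpe_coe]
        exact hpow.hasDerivAt
      · rw [hsymζ, hpe_coe]
        exact (contDiffAt_id.pow _)
    exact ContDiffAt.comp (f := fun u => Ev u / 4) (g := pe.symm) 0 hsym hEvcd
  -- the good parameter set S
  set S : Set ℂ := T ∩ (fun u => Ev u / 4) ⁻¹' pe.target with hS
  have hBcont : ContinuousOn Bf T :=
    (continuous_fst.comp continuous_snd).comp_continuousOn hσcont
  have hCcont : ContinuousOn Cf T :=
    (continuous_snd.comp continuous_snd).comp_continuousOn hσcont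
  have hEvcont : ContinuousOn (fun u => Ev u / 4) T := by
    apply ContinuousOn.div_const
    exact ((continuousOn_id.pow e).mul (hBcont.pow 2)).sub
      (continuousOn_const.mul hCcont)
  have hSopen : IsOpen S := hEvcont.isOpen_inter_preimage hTopen pe.open_target
  have h0S : (0 : ℂ) ∈ S := ⟨h0T, hζtar⟩
  have hρpow : ∀ u ∈ S, (ρ u)^(2*d+e) = Ev u / 4 := by
    intro u hu
    have h := pe.right_inv hu.2
    rwa [hpe_coe] at h
  -- ## Step 4: the shear map Φ and its local invertibility
  set β : ℂ → ℂ := fun u => u * ρ u with hβ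
  set bb : ℂ → ℂ := fun u => u^d * u^e * Bf u with hbb
  set cc : ℂ → ℂ := fun u => u^d * u^d * u^e * Cf u with hcc
  set Φ : ℂ × ℂ → ℂ × ℂ := fun p => (β p.1, p.2 + bb p.1 / 2) with hΦ
  have hβs : HasStrictDerivAt β w₀ 0 := by
    have h := (hasStrictDerivAt_id (0 : ℂ)).mul (hρcd.hasStrictDerivAt one_ne_zero)
    refine h.congr_deriv ?_
    simp [hρ0]
  have hbb2cd : ContDiffAt ℂ 1 (fun u => bb u / 2) 0 := by
    apply ContDiffAt.div_const
    rw [hbb]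
    exact ((contDiffAt_id.pow d).mul (contDiffAt_id.pow e)).mul hBcd
  have Hbb2 : HasStrictDerivAt (fun u => bb u / 2) (deriv (fun u => bb u / 2) 0) 0 :=
    hbb2cd.hasStrictDerivAt one_ne_zero
  set δ : ℂ := deriv (fun u => bb u / 2) 0 with hδ
  set Lφ := (shearLE w₀ δ hw₀ne).toContinuousLinearEquiv with hLφ
  have hΦs : HasStrictFDerivAt Φ (Lφ : (ℂ × ℂ) →L[ℂ] (ℂ × ℂ)) (0, 0) := by
    have H1 := hβs.hasStrictFDerivAt.comp (f := (Prod.fst : ℂ × ℂ → ℂ)) ((0 : ℂ), (0 : ℂ)) hasStrictFDerivAt_fst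
    have H2 := hasStrictFDerivAt_snd.add
      (Hbb2.hasStrictFDerivAt.comp (f := (Prod.fst : ℂ × ℂ → ℂ)) ((0 : ℂ), (0 : ℂ)) hasStrictFDerivAt_fst)
    have Htot := H1.prodMk H2
    rw [hΦ]
    refine Htot.congr_fderiv ?_
    apply ContinuousLinearMap.ext
    intro q
    simp [hLφ, shearLE, Prod.ext_iff]
    try trivial
    try constructor <;> ring
  set eΦ := hΦs.toOpenPartialHomeomorph _ with heΦ
  have heΦ_coe : (eΦ : ℂ × ℂ → ℂ × ℂ) = Φ := hΦs.toOpenPartialHomeomorph_coe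
  have h00src : ((0, 0) : ℂ × ℂ) ∈ eΦ.source := hΦs.mem_toOpenPartialHomeomorph_source
  have hΦ00 : Φ (0, 0) = (0, 0) := by
    simp [hΦ, hβ, hbb, zero_pow hd]
  -- ## Step 5: the quadratic cofactor and final assembly
  set Qf : ℂ × ℂ → ℂ := fun p => a₄ * p.2^2 + (P3.eval p.1 - a₄ * bb p.1) * p.2
      + ((1 + P2.eval p.1) - P3.eval p.1 * bb p.1 - a₄ * cc p.1 + a₄ * (bb p.1)^2) with hQf
  have hbbcont : ContinuousOn bb T := by
    rw [hbb]
    exact ((continuousOn_id.pow d).mul (continuousOn_id.pow e)).mul hBcont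
  have hcccont : ContinuousOn cc T := by
    rw [hcc]
    exact (((continuousOn_id.pow d).mul (continuousOn_id.pow d)).mul
      (continuousOn_id.pow e)).mul hCcont
  have hST : S ⊆ T := Set.inter_subset_left
  have hQcont : ContinuousOn Qf (S ×ˢ (Set.univ : Set ℂ)) := by
    have hfstmap : Set.MapsTo Prod.fst (S ×ˢ (Set.univ : Set ℂ)) T :=
      fun p hp => hST hp.1
    have hbf : ContinuousOn (fun p : ℂ × ℂ => bb p.1) (S ×ˢ (Set.univ : Set ℂ)) :=
      hbbcont.comp continuousOn_fst hfstmap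
    have hcf : ContinuousOn (fun p : ℂ × ℂ => cc p.1) (S ×ˢ (Set.univ : Set ℂ)) :=
      hcccont.comp continuousOn_fst hfstmap
    have h3c : ContinuousOn (fun p : ℂ × ℂ => P3.eval p.1) (S ×ˢ (Set.univ : Set ℂ)) := by
      fun_prop
    have h2c : ContinuousOn (fun p : ℂ × ℂ => P2.eval p.1) (S ×ˢ (Set.univ : Set ℂ)) := by
      fun_prop
    rw [hQf]
    apply ContinuousOn.add
    apply ContinuousOn.add
    · exact continuousOn_const.mul (continuousOn_snd.pow 2)
    · exact (h3c.sub (continuousOn_const.mul hbf)).mul continuousOn_snd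
    · exact ((((continuousOn_const.add h2c).sub (h3c.mul hbf)).sub
        (continuousOn_const.mul hcf)).add (continuousOn_const.mul (hbf.pow 2)))
  have hQ00 : Qf (0, 0) = 1 := by
    simp [hQf, hbb, hcc, zero_pow hd, h2, h3]
  set W : Set (ℂ × ℂ) := (S ×ˢ (Set.univ : Set ℂ)) ∩ Qf ⁻¹' {(0 : ℂ)}ᶜ with hW
  have hWopen : IsOpen W :=
    hQcont.isOpen_inter_preimage (hSopen.prod isOpen_univ) isOpen_compl_singleton
  have h0W : ((0, 0) : ℂ × ℂ) ∈ W := by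
    refine ⟨⟨h0S, trivial⟩, ?_⟩
    show Qf (0, 0) ≠ 0
    rw [hQ00]
    exact one_ne_zero
  set EF := (OpenPartialHomeomorph.ofSet W hWopen).trans eΦ with hEF
  have hEFsrc : EF.source = W ∩ eΦ.source := by
    rw [hEF]
    simp [OpenPartialHomeomorph.trans_source]
  have hEFcoe : (EF : ℂ × ℂ → ℂ × ℂ) = Φ := by
    rw [hEF]
    simp [OpenPartialHomeomorph.coe_trans, heΦ_coe]
  have h0src : ((0, 0) : ℂ × ℂ) ∈ EF.source := by
    rw [hEFsrc]
    exact ⟨h0W, h00src⟩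
  have hEF00 : EF (0, 0) = (0, 0) := by
    rw [congrFun hEFcoe ((0, 0) : ℂ × ℂ), hΦ00]
  have h0tar : ((0, 0) : ℂ × ℂ) ∈ EF.target := by
    have h := EF.map_source h0src
    rwa [hEF00] at h
  have key : ∀ pv : ℂ × ℂ, pv ∈ EF.source →
      (a₄ * pv.2^4 + P3.eval pv.1 * pv.2^3 + (1 + P2.eval pv.1) * pv.2^2
        + pv.1^(d+e) * P1.eval pv.1 * pv.2 + pv.1^(2*d+e) * P0.eval pv.1 = 0
      ↔ (Φ pv).2^2 - (Φ pv).1^(2*d+e) = 0) := by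
    intro pv hpv
    rw [hEFsrc] at hpv
    have hu : pv.1 ∈ S := hpv.1.1.1
    have hQ : Qf pv ≠ 0 := hpv.1.2
    have E1 := heqA pv.1 (hST hu)
    have E2 := heqB pv.1 (hST hu)
    have hprod : a₄ * pv.2^4 + P3.eval pv.1 * pv.2^3 + (1 + P2.eval pv.1) * pv.2^2
        + pv.1^(d+e) * P1.eval pv.1 * pv.2 + pv.1^(2*d+e) * P0.eval pv.1
        = (pv.2^2 + bb pv.1 * pv.2 + cc pv.1) * Qf pv
          + pv.1^d * pv.1^e * (eqA a₄ P3 P2 P1 d e pv.1 (Bf pv.1) (Cf pv.1)) * pv.2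
          + pv.1^d * pv.1^d * pv.1^e * (eqB a₄ P3 P2 P0 d e pv.1 (Bf pv.1) (Cf pv.1)) := by
      simp only [hQf, hbb, hcc, eqA, eqB, two_mul, pow_add]
      ring
    have hfe : a₄ * pv.2^4 + P3.eval pv.1 * pv.2^3 + (1 + P2.eval pv.1) * pv.2^2
        + pv.1^(d+e) * P1.eval pv.1 * pv.2 + pv.1^(2*d+e) * P0.eval pv.1
        = (pv.2^2 + bb pv.1 * pv.2 + cc pv.1) * Qf pv := by
      rw [hprod, E1, E2]
      ring
    have hβp : (β pv.1)^(2*d+e) = pv.1^(2*d+e) * (Ev pv.1 / 4) := by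
      rw [hβ]
      simp only [mul_pow]
      rw [hρpow pv.1 hu]
    have hgv : (Φ pv).2^2 - (Φ pv).1^(2*d+e)
        = pv.2^2 + bb pv.1 * pv.2 + cc pv.1 := by
      show (pv.2 + bb pv.1 / 2)^2 - (β pv.1)^(2*d+e) = _
      rw [hβp]
      simp only [hEv, hbb, hcc, two_mul, pow_add]
      ring
    rw [hfe, hgv, mul_eq_zero]
    simp [hQ]
  refine ⟨EF.source, EF.target, EF.open_source, EF.open_target, h0src, h0tar,
    EF.toHomeomorphSourceTarget, ?_, ?_⟩
  · show ((EF.toHomeomorphSourceTarget ⟨0, h0src⟩ : EF.target) : ℂ × ℂ) = 0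
    rw [OpenPartialHomeomorph.toHomeomorphSourceTarget_apply_coe]
    exact hEF00
  · rintro ⟨pv, hpv⟩
    have hφv : ((EF.toHomeomorphSourceTarget ⟨pv, hpv⟩ : EF.target) : ℂ × ℂ) = Φ pv := by
      rw [OpenPartialHomeomorph.toHomeomorphSourceTarget_apply_coe,
        congrFun hEFcoe pv]
    simp only [hφv]
    exact key pv hpv

end Core

end Stmt10Aux

/-- Lemma 1(3): for g(u,v) = v² + (c₁v − φ₁(u))³(c₂v − φ₂(u))
with c₁, c₂ ≠ 0, ord φ₁ = ι₁ ∈ {1,2}, ord φ₂ = ι₂ ∈ {1,2}, the germ {g = 0}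
at the origin is topologically equivalent to a_{3ι₁+ι₂−1} : v² − u^{3ι₁+ι₂} = 0. -/
theorem stmt10 (c₁ c₂ : ℂ) (h1 : c₁ ≠ 0) (h2 : c₂ ≠ 0)
    (ι₁ ι₂ : ℕ) (hι₁ : ι₁ = 1 ∨ ι₁ = 2) (hι₂ : ι₂ = 1 ∨ ι₂ = 2)
    (φ₁ φ₂ : Polynomial ℂ) (hφ₁ : φ₁ ≠ 0) (hφ₂ : φ₂ ≠ 0)
    (ho1 : φ₁.natTrailingDegree = ι₁) (ho2 : φ₂.natTrailingDegree = ι₂) :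
    GermTopEquiv
      (fun p => p.2 ^ 2 + (c₁ * p.2 - φ₁.eval p.1) ^ 3 * (c₂ * p.2 - φ₂.eval p.1))
      (fun p => p.2 ^ 2 - p.1 ^ (3 * ι₁ + ι₂)) := by
  classical
  open Polynomial Stmt10Aux in
  -- extract the exact trailing parts
  obtain ⟨ψ₁, hψ₁⟩ : (X : ℂ[X]) ^ ι₁ ∣ φ₁ := by
    rw [← ho1]
    exact X_pow_dvd_iff.mpr fun k hk => coeff_eq_zero_of_lt_natTrailingDegree hk
  obtain ⟨ψ₂, hψ₂⟩ : (X : ℂ[X]) ^ ι₂ ∣ φ₂ := by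
    rw [← ho2]
    exact X_pow_dvd_iff.mpr fun k hk => coeff_eq_zero_of_lt_natTrailingDegree hk
  have hι₁pos : 0 < ι₁ := by rcases hι₁ with rfl | rfl <;> norm_num
  have hι₂pos : 0 < ι₂ := by rcases hι₂ with rfl | rfl <;> norm_num
  have hx0 : ψ₁.eval 0 ≠ 0 := by
    have h := Polynomial.coeff_natTrailingDegree_ne_zero.mpr hφ₁
    rw [ho1, hψ₁] at h
    have hc : (X ^ ι₁ * ψ₁).coeff ι₁ = ψ₁.coeff 0 := by
      simpa using Polynomial.coeff_X_pow_mul ψ₁ ι₁ 0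
    rw [hc, Polynomial.coeff_zero_eq_eval_zero] at h
    exact h
  have hy0 : ψ₂.eval 0 ≠ 0 := by
    have h := Polynomial.coeff_natTrailingDegree_ne_zero.mpr hφ₂
    rw [ho2, hψ₂] at h
    have hc : (X ^ ι₂ * ψ₂).coeff ι₂ = ψ₂.coeff 0 := by
      simpa using Polynomial.coeff_X_pow_mul ψ₂ ι₂ 0
    rw [hc, Polynomial.coeff_zero_eq_eval_zero] at h
    exact h
  have hφ10 : φ₁.eval 0 = 0 := by
    rw [← Polynomial.coeff_zero_eq_eval_zero]
    exact coeff_eq_zero_of_lt_natTrailingDegree (by omega)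
  have hφ20 : φ₂.eval 0 = 0 := by
    rw [← Polynomial.coeff_zero_eq_eval_zero]
    exact coeff_eq_zero_of_lt_natTrailingDegree (by omega)
  set P3c : ℂ[X] := -(C (c₁^3)) * φ₂ - C (3*c₁^2*c₂) * φ₁ with hP3c
  set P2c : ℂ[X] := C (3*c₁^2) * (φ₁*φ₂) + C (3*c₁*c₂) * φ₁^2 with hP2c
  set P0c : ℂ[X] := ψ₁^3 * ψ₂ with hP0c
  have hP3 : P3c.eval 0 = 0 := by simp [hP3c, hφ10, hφ20]
  have hP2 : P2c.eval 0 = 0 := by simp [hP2c, hφ10, hφ20]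
  have hP0 : P0c.eval 0 ≠ 0 := by
    simp only [hP0c, eval_mul, eval_pow]
    exact mul_ne_zero (pow_ne_zero _ hx0) hy0
  rcases hι₁ with rfl | rfl <;> rcases hι₂ with rfl | rfl
  · -- ι₁ = 1, ι₂ = 1 : k = 3, m = 4, d = 1, e = 2
    refine germTopEquiv_congr ?_ ?_
      (core (c₁^3*c₂) P3c P2c (-(C (3*c₁)) * (ψ₁^2*ψ₂) - C c₂ * ψ₁^3) P0c 1 2
        one_ne_zero two_ne_zero hP3 hP2 hP0)
    · intro p
      simp only [hP3c, hP2c, hP0c, hψ₁, hψ₂, eval_mul, eval_pow, eval_add, eval_sub, eval_neg,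
        eval_C, eval_X]
      ring
    · intro p; norm_num
  · -- ι₁ = 1, ι₂ = 2 : k = 3, m = 5, d = 2, e = 1
    refine germTopEquiv_congr ?_ ?_
      (core (c₁^3*c₂) P3c P2c (-(C (3*c₁)) * (X * (ψ₁^2*ψ₂)) - C c₂ * ψ₁^3) P0c 2 1
        two_ne_zero one_ne_zero hP3 hP2 hP0)
    · intro p
      simp only [hP3c, hP2c, hP0c, hψ₁, hψ₂, eval_mul, eval_pow, eval_add, eval_sub, eval_neg,
        eval_C, eval_X]
      ring
    · intro p; norm_num
  · -- ι₁ = 2, ι₂ = 1 : k = 5, m = 7, d = 2, e = 3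
    refine germTopEquiv_congr ?_ ?_
      (core (c₁^3*c₂) P3c P2c (-(C (3*c₁)) * (ψ₁^2*ψ₂) - C c₂ * (X * ψ₁^3)) P0c 2 3
        two_ne_zero (by norm_num) hP3 hP2 hP0)
    · intro p
      simp only [hP3c, hP2c, hP0c, hψ₁, hψ₂, eval_mul, eval_pow, eval_add, eval_sub, eval_neg,
        eval_C, eval_X]
      ring
    · intro p; norm_num
  · -- ι₁ = 2, ι₂ = 2 : k = 6, m = 8, d = 2, e = 4
    refine germTopEquiv_congr ?_ ?_
      (core (c₁^3*c₂) P3c P2c (-(C (3*c₁)) * (ψ₁^2*ψ₂) - C c₂ * ψ₁^3) P0c 2 4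
        two_ne_zero (by norm_num) hP3 hP2 hP0)
    · intro p
      simp only [hP3c, hP2c, hP0c, hψ₁, hψ₂, eval_mul, eval_pow, eval_add, eval_sub, eval_neg,
        eval_C, eval_X]
      ring
    · intro p; norm_num
end

section
/- In ℂ[x,z], let f₂(x,z) = x² + a₁·xz + a₀·z², f₃(x,z) = x³ + c₂·z² + c₃·x²z + c₄·xz² + b₀·z³ (so the degree-2-in-Z coefficient in x of f₂³ − f₃² is constrained). If g(x,z) := (f₂³ − f₃²)/z² is a polynomial and c₂ ≠ 0, then the lowest-order part of g at the origin is −c₂²·z² − 2c₂·x³; in particular g has an a₂ singularity (cusp) at the origin. -/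
open MvPolynomial

noncomputable def x : MvPolynomial (Fin 2) ℂ := X 0
noncomputable def z : MvPolynomial (Fin 2) ℂ := X 1

/-! ### Auxiliary material -/

noncomputable def Epoly (a₁ a₀ c₂ c₃ c₄ b₀ : ℂ) : MvPolynomial (Fin 2) ℂ :=
  -C c₂ ^ 2 * z ^ 2 - 2 * C c₂ * x ^ 3
  - 2 * C c₂ * C b₀ * z ^ 3
  + (C a₀ ^ 3 - C b₀ ^ 2) * z ^ 4
  - 2 * C c₂ * C c₄ * x * z ^ 2
  + (-2 * C c₄ * C b₀ + 3 * C a₁ * C a₀ ^ 2) * x * z ^ 3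
  - 2 * C c₂ * C c₃ * x ^ 2 * z
  + (-C c₄ ^ 2 - 2 * C c₃ * C b₀ + 3 * C a₀ ^ 2 + 3 * C a₁ ^ 2 * C a₀) * x ^ 2 * z ^ 2
  + (-2 * C b₀ - 2 * C c₃ * C c₄ + 6 * C a₁ * C a₀ + C a₁ ^ 3) * x ^ 3 * z
  + (-2 * C c₄ - C c₃ ^ 2 + 3 * C a₀ + 3 * C a₁ ^ 2) * x ^ 4

lemma single_add_eq_iff (a b : ℕ) (d : Fin 2 →₀ ℕ) :
    (Finsupp.single (0 : Fin 2) a + Finsupp.single 1 b = d) ↔ (a = d 0 ∧ b = d 1) := by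
  constructor
  · rintro rfl
    simp [Finsupp.single_apply]
  · rintro ⟨h0, h1⟩
    ext i
    fin_cases i <;> simp [Finsupp.single_apply, ← h0, ← h1]

lemma coeff_Cxz (c : ℂ) (a b : ℕ) (d : Fin 2 →₀ ℕ) :
    coeff d (C c * x ^ a * z ^ b) = if a = d 0 ∧ b = d 1 then c else 0 := by
  rw [x, z, X_pow_eq_monomial, X_pow_eq_monomial, C_apply, monomial_mul, monomial_mul,
    coeff_monomial]
  simp only [zero_add, one_mul, mul_one, single_add_eq_iff]
set_option maxHeartbeats 1000000 in
open ContinuousLinearMap in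
/-- Weierstrass-type factorization step via the inverse function theorem. -/
theorem factor_step (E0 E1 E2 E3 : ℂ → ℂ) (E4 : ℂ)
    (hE0 : ContDiff ℂ ⊤ E0) (hE1 : ContDiff ℂ ⊤ E1) (hE2 : ContDiff ℂ ⊤ E2)
    (hE3 : ContDiff ℂ ⊤ E3)
    (hE00 : E0 0 = 0) (hE10 : E1 0 = 0) (hd0 : HasDerivAt E0 0 0) (hd1 : HasDerivAt E1 0 0)
    (hk : E2 0 ≠ 0) :
    ∃ pf qf : ℂ → ℂ, ContDiffAt ℂ 2 pf 0 ∧ ContDiffAt ℂ 2 qf 0 ∧ pf 0 = 0 ∧ qf 0 = 0 ∧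
      ∀ᶠ X in nhds 0,
        (E1 X - pf X * E2 X + pf X ^ 2 * E3 X - pf X ^ 3 * E4 + 2 * pf X * qf X * E4
            - qf X * E3 X = 0)
        ∧ (E0 X - qf X * E2 X + pf X * qf X * E3 X - pf X ^ 2 * qf X * E4 + qf X ^ 2 * E4 = 0) := by
  classical
  set k := E2 0 with hkdef
  set m := E3 0 with hmdef
  -- the map H
  set F1 : ℂ × ℂ × ℂ → ℂ := fun y =>
    E1 y.1 - y.2.1 * E2 y.1 + y.2.1 * y.2.1 * E3 y.1 - y.2.1 * y.2.1 * y.2.1 * E4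
      + 2 * y.2.1 * y.2.2 * E4 - y.2.2 * E3 y.1 with hF1def
  set F2 : ℂ × ℂ × ℂ → ℂ := fun y =>
    E0 y.1 - y.2.2 * E2 y.1 + y.2.1 * y.2.2 * E3 y.1 - y.2.1 * y.2.1 * y.2.2 * E4
      + y.2.2 * y.2.2 * E4 with hF2def
  set H : ℂ × ℂ × ℂ → ℂ × ℂ × ℂ := fun y => (y.1, F1 y, F2 y) with hHdef
  -- projections
  set Q1 : ℂ × ℂ × ℂ →L[ℂ] ℂ := fst ℂ ℂ (ℂ × ℂ) with hQ1
  set Q2 : ℂ × ℂ × ℂ →L[ℂ] ℂ := (fst ℂ ℂ ℂ).comp (snd ℂ ℂ (ℂ × ℂ)) with hQ2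
  set Q3 : ℂ × ℂ × ℂ →L[ℂ] ℂ := (snd ℂ ℂ ℂ).comp (snd ℂ ℂ (ℂ × ℂ)) with hQ3
  set D : ℂ × ℂ × ℂ →L[ℂ] ℂ × ℂ × ℂ :=
    Q1.prod (((-k) • Q2 + (-m) • Q3).prod ((-k) • Q3)) with hD
  set Dinv : ℂ × ℂ × ℂ →L[ℂ] ℂ × ℂ × ℂ :=
    Q1.prod ((((-k⁻¹) • Q2 + (m * k⁻¹ * k⁻¹) • Q3)).prod ((-k⁻¹) • Q3)) with hDinv
  have hli : Function.LeftInverse Dinv D := by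
    intro y
    simp only [hD, hDinv, hQ1, hQ2, hQ3, ContinuousLinearMap.prod_apply,
      ContinuousLinearMap.add_apply, ContinuousLinearMap.coe_smul', Pi.smul_apply,
      ContinuousLinearMap.coe_comp', Function.comp_apply, coe_fst', coe_snd', smul_eq_mul]
    obtain ⟨u, v, w⟩ := y
    simp only
    refine Prod.ext rfl (Prod.ext ?_ ?_) <;> field_simp <;> ring
  have hri : Function.RightInverse Dinv D := by
    intro y
    simp only [hD, hDinv, hQ1, hQ2, hQ3, ContinuousLinearMap.prod_apply,
      ContinuousLinearMap.add_apply, ContinuousLinearMap.coe_smul', Pi.smul_apply,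
      ContinuousLinearMap.coe_comp', Function.comp_apply, coe_fst', coe_snd', smul_eq_mul]
    obtain ⟨u, v, w⟩ := y
    simp only
    refine Prod.ext rfl (Prod.ext ?_ ?_) <;> field_simp <;> ring
  set De : (ℂ × ℂ × ℂ) ≃L[ℂ] (ℂ × ℂ × ℂ) := ContinuousLinearEquiv.equivOfInverse D Dinv hli hri
    with hDe
  -- derivative facts for the pieces
  have hx1 : HasFDerivAt (fun y : ℂ × ℂ × ℂ => y.1) Q1 (0 : ℂ × ℂ × ℂ) := hasFDerivAt_fst
  have hp1 : HasFDerivAt (fun y : ℂ × ℂ × ℂ => y.2.1) Q2 (0 : ℂ × ℂ × ℂ) :=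
    (hasFDerivAt_snd).fst
  have hq1 : HasFDerivAt (fun y : ℂ × ℂ × ℂ => y.2.2) Q3 (0 : ℂ × ℂ × ℂ) :=
    (hasFDerivAt_snd).snd
  have hcomp : ∀ (G : ℂ → ℂ), ContDiff ℂ ⊤ G → HasFDerivAt (fun y : ℂ × ℂ × ℂ => G y.1)
      ((deriv G 0) • Q1) (0 : ℂ × ℂ × ℂ) := by
    intro G hG
    have h1 : HasDerivAt G (deriv G 0) ((0 : ℂ × ℂ × ℂ).1) :=
      ((hG.differentiable (by simp)) 0).hasDerivAt
    exact HasDerivAt.comp_hasFDerivAt _ h1 hx1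
  have hc0 : HasFDerivAt (fun y : ℂ × ℂ × ℂ => E0 y.1) ((0:ℂ) • Q1) (0 : ℂ × ℂ × ℂ) :=
    HasDerivAt.comp_hasFDerivAt _ (by simpa using hd0) hx1
  have hc1 : HasFDerivAt (fun y : ℂ × ℂ × ℂ => E1 y.1) ((0:ℂ) • Q1) (0 : ℂ × ℂ × ℂ) :=
    HasDerivAt.comp_hasFDerivAt _ (by simpa using hd1) hx1
  have hc2 := hcomp E2 hE2
  have hc3 := hcomp E3 hE3
  have hF1d : HasFDerivAt F1 ((-k) • Q2 + (-m) • Q3) (0 : ℂ × ℂ × ℂ) := by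
    have h := ((((hc1.sub (hp1.mul hc2)).add ((hp1.mul hp1).mul hc3)).sub
        (((hp1.mul hp1).mul hp1).mul_const E4)).add
          (((hp1.const_mul 2).mul hq1).mul_const E4)).sub (hq1.mul hc3)
    refine h.congr_fderiv ?_
    refine ContinuousLinearMap.ext fun y => ?_
    simp [smul_eq_mul, hkdef, hmdef, Prod.fst_zero, Prod.snd_zero]
    try ring
  have hF2d : HasFDerivAt F2 ((-k) • Q3) (0 : ℂ × ℂ × ℂ) := by
    have h := (((hc0.sub (hq1.mul hc2)).add ((hp1.mul hq1).mul hc3)).sub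
        (((hp1.mul hp1).mul hq1).mul_const E4)).add ((hq1.mul hq1).mul_const E4)
    refine h.congr_fderiv ?_
    refine ContinuousLinearMap.ext fun y => ?_
    simp [smul_eq_mul, hkdef, hmdef, Prod.fst_zero, Prod.snd_zero]
    try ring
  have hHd : HasFDerivAt H (De : (ℂ × ℂ × ℂ) →L[ℂ] ℂ × ℂ × ℂ) (0 : ℂ × ℂ × ℂ) := by
    have h : HasFDerivAt H D (0 : ℂ × ℂ × ℂ) := hx1.prodMk (hF1d.prodMk hF2d)
    have hcoe : ((De : (ℂ × ℂ × ℂ) ≃L[ℂ] ℂ × ℂ × ℂ) : (ℂ × ℂ × ℂ) →L[ℂ] ℂ × ℂ × ℂ) = D := rfl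
    rw [hcoe]
    exact h
  have hHc : ContDiffAt ℂ 2 H (0 : ℂ × ℂ × ℂ) := by
    have e2 : ContDiff ℂ 2 (fun y : ℂ × ℂ × ℂ => E2 y.1) := (hE2.of_le le_top).comp contDiff_fst
    have e3 : ContDiff ℂ 2 (fun y : ℂ × ℂ × ℂ => E3 y.1) := (hE3.of_le le_top).comp contDiff_fst
    have e1 : ContDiff ℂ 2 (fun y : ℂ × ℂ × ℂ => E1 y.1) := (hE1.of_le le_top).comp contDiff_fst
    have e0 : ContDiff ℂ 2 (fun y : ℂ × ℂ × ℂ => E0 y.1) := (hE0.of_le le_top).comp contDiff_fst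
    have cp : ContDiff ℂ 2 (fun y : ℂ × ℂ × ℂ => y.2.1) := contDiff_snd.fst
    have cq : ContDiff ℂ 2 (fun y : ℂ × ℂ × ℂ => y.2.2) := contDiff_snd.snd
    have cF1 : ContDiff ℂ 2 F1 :=
      ((((e1.sub (cp.mul e2)).add ((cp.mul cp).mul e3)).sub
        (((cp.mul cp).mul cp).mul contDiff_const)).add
          (((contDiff_const.mul cp).mul cq).mul contDiff_const)).sub (cq.mul e3)
    have cF2 : ContDiff ℂ 2 F2 :=
      (((e0.sub (cq.mul e2)).add ((cp.mul cq).mul e3)).sub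
        (((cp.mul cp).mul cq).mul contDiff_const)).add ((cq.mul cq).mul contDiff_const)
    exact (contDiff_fst.contDiffAt).prodMk ((cF1.contDiffAt).prodMk (cF2.contDiffAt))
  -- inverse function theorem
  have hone : (2:WithTop ℕ∞) ≠ 0 := by simp
  set L := hHc.localInverse hHd hone with hL
  have hLcd : ContDiffAt ℂ 2 L (H 0) := hHc.to_localInverse hHd hone
  have hH0 : H (0 : ℂ × ℂ × ℂ) = 0 := by
    simp [hHdef, hF1def, hF2def, hE00, hE10]
  have hL0 : L (H 0) = 0 := hHc.localInverse_apply_image hHd hone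
  set pf : ℂ → ℂ := fun X => (L (X, 0, 0)).2.1 with hpf
  set qf : ℂ → ℂ := fun X => (L (X, 0, 0)).2.2 with hqf
  have hemb : ContDiffAt ℂ 2 (fun X : ℂ => (X, (0:ℂ), (0:ℂ))) 0 :=
    (contDiffAt_id.prodMk contDiffAt_const)
  have hLcd' : ContDiffAt ℂ 2 L ((0:ℂ), (0:ℂ), (0:ℂ)) := by rwa [hH0] at hLcd
  have hLe : ContDiffAt ℂ 2 (fun X : ℂ => L (X, 0, 0)) 0 :=
    ContDiffAt.comp (g := L) (f := fun X : ℂ => (X, (0:ℂ), (0:ℂ))) 0 hLcd' hemb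
  have hpc : ContDiffAt ℂ 2 pf 0 := (hLe.snd).fst
  have hqc : ContDiffAt ℂ 2 qf 0 := (hLe.snd).snd
  have hL00 : L ((0:ℂ), (0:ℂ), (0:ℂ)) = 0 := by rwa [hH0] at hL0
  have hp0 : pf 0 = 0 := by
    show (L ((0:ℂ), (0:ℂ), (0:ℂ))).2.1 = 0
    rw [hL00]
    rfl
  have hq0 : qf 0 = 0 := by
    show (L ((0:ℂ), (0:ℂ), (0:ℂ))).2.2 = 0
    rw [hL00]
    rfl
  -- eventual right-inverse property
  have hev : ∀ᶠ y in nhds (H 0), H (L y) = y :=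
    (hHc.hasStrictFDerivAt' hHd hone).eventually_right_inverse
  have hten : Filter.Tendsto (fun X : ℂ => (X, (0:ℂ), (0:ℂ))) (nhds 0) (nhds (H 0)) := by
    rw [hH0]
    exact (continuous_id.prodMk continuous_const).tendsto' 0 _ rfl
  have hev2 : ∀ᶠ X in nhds (0:ℂ), H (L (X, 0, 0)) = (X, 0, 0) := hten.eventually hev
  refine ⟨pf, qf, hpc, hqc, hp0, hq0, ?_⟩
  filter_upwards [hev2] with X hX
  have h1 : (L (X, 0, 0)).1 = X := by
    have := congrArg Prod.fst hX
    simpa [hHdef] using this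
  have hF1X : F1 (L (X, 0, 0)) = 0 := by
    have := congrArg (fun y => y.2.1) hX
    simpa [hHdef] using this
  have hF2X : F2 (L (X, 0, 0)) = 0 := by
    have := congrArg (fun y => y.2.2) hX
    simpa [hHdef] using this
  rw [hF1def] at hF1X
  rw [hF2def] at hF2X
  simp only [h1] at hF1X hF2X
  constructor
  · linear_combination hF1X
  · linear_combination hF2X
set_option maxHeartbeats 1600000 in
theorem cusp_germ (E0p E1p E2p E3p : ℂ → ℂ) (E4 : ℂ) (Af Bf : ℂ → ℂ)
    (hE2 : ContDiff ℂ ⊤ E2p) (hE3 : ContDiff ℂ ⊤ E3p)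
    (hA : ContDiff ℂ ⊤ Af) (hB : ContDiff ℂ ⊤ Bf)
    (hE0 : ∀ X, E0p X = X ^ 3 * Af X) (hE1 : ∀ X, E1p X = X ^ 2 * Bf X)
    (hA0 : Af 0 ≠ 0) (hk : E2p 0 ≠ 0) :
    GermTopEquiv
      (fun p => E0p p.1 + E1p p.1 * p.2 + E2p p.1 * p.2 ^ 2 + E3p p.1 * p.2 ^ 3 + E4 * p.2 ^ 4)
      (fun p => p.2 ^ 2 + p.1 ^ 3) := by
  classical
  obtain rfl : E0p = fun X => X ^ 3 * Af X := funext hE0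
  obtain rfl : E1p = fun X => X ^ 2 * Bf X := funext hE1
  have hone : (2 : WithTop ℕ∞) ≠ 0 := by simp
  have h2top : (2 : WithTop ℕ∞) ≠ ((⊤:ℕ∞) : WithTop ℕ∞) := by decide
  -- Step 1: factorization
  obtain ⟨pf, qf, hpc, hqc, hp0, hq0, hfeq⟩ :=
    factor_step (fun X => X ^ 3 * Af X) (fun X => X ^ 2 * Bf X) E2p E3p E4
      ((contDiff_id.pow 3).mul hA) ((contDiff_id.pow 2).mul hB) hE2 hE3
      (by simp) (by simp)
      (by simpa [Pi.mul_def] using ((hasDerivAt_pow 3 (0:ℂ)).mul ((hA.differentiable (by simp) 0).hasDerivAt)))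
      (by simpa [Pi.mul_def] using ((hasDerivAt_pow 2 (0:ℂ)).mul ((hB.differentiable (by simp) 0).hasDerivAt)))
      hk
  -- Step 2: derived functions
  set r1f : ℂ → ℂ := fun X => E3p X - pf X * E4 with hr1f
  set r0f : ℂ → ℂ := fun X => E2p X - pf X * r1f X - qf X * E4 with hr0f
  have hr1c : ContDiffAt ℂ 2 r1f 0 := (hE3.of_le le_top).contDiffAt.sub (hpc.mul contDiffAt_const)
  have hr0c : ContDiffAt ℂ 2 r0f 0 :=
    ((hE2.of_le le_top).contDiffAt.sub (hpc.mul hr1c)).sub (hqc.mul contDiffAt_const)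
  have hr00 : r0f 0 = E2p 0 := by simp [hr0f, hr1f, hp0, hq0]
  have hr00ne : r0f 0 ≠ 0 := by rw [hr00]; exact hk
  set qt : ℂ → ℂ := fun X => Af X / r0f X with hqt
  set pt : ℂ → ℂ := fun X => (Bf X - X * qt X * r1f X) / r0f X with hpt
  set vf : ℂ → ℂ := fun X => qt X - X * pt X ^ 2 / 4 with hvf
  have hqtc : ContDiffAt ℂ 2 qt 0 := (hA.of_le le_top).contDiffAt.div hr0c hr00ne
  have hptc : ContDiffAt ℂ 2 pt 0 :=
    ((hB.of_le le_top).contDiffAt.sub ((contDiffAt_id.mul hqtc).mul hr1c)).div hr0c hr00ne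
  have hvc : ContDiffAt ℂ 2 vf 0 :=
    hqtc.sub ((contDiffAt_id.mul (hptc.pow 2)).div_const 4)
  have hv0 : vf 0 = Af 0 / r0f 0 := by simp [hvf, hqt, hpt]
  have hv0ne : vf 0 ≠ 0 := by rw [hv0]; exact div_ne_zero hA0 hr00ne
  -- Step 3: cube root
  obtain ⟨ζ, hζ3⟩ := IsAlgClosed.exists_pow_nat_eq (k := ℂ) (vf 0) (n := 3) (by norm_num)
  have hζ : ζ ≠ 0 := fun h => hv0ne (by rw [← hζ3, h]; norm_num)
  have h3ζ : (3 : ℂ) * ζ ^ 2 ≠ 0 := by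
    simp [hζ, pow_eq_zero_iff]
  set e3 : ℂ ≃L[ℂ] ℂ := ContinuousLinearEquiv.unitsEquivAut ℂ (Units.mk0 _ h3ζ) with he3
  have hcube : ContDiffAt ℂ 2 (fun u : ℂ => u ^ 3) ζ := (contDiff_id.pow 3).contDiffAt
  have hcubed : HasFDerivAt (fun u : ℂ => u ^ 3) ((e3 : ℂ →L[ℂ] ℂ)) ζ := by
    refine (hasDerivAt_pow 3 ζ).hasFDerivAt.congr_fderiv ?_
    refine ContinuousLinearMap.ext fun u => ?_
    simp [he3, ContinuousLinearEquiv.unitsEquivAut_apply, smul_eq_mul]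
    try ring
  set ρ : ℂ → ℂ := hcube.localInverse hcubed hone with hρ
  have hρcd : ContDiffAt ℂ 2 ρ (ζ ^ 3) := hcube.to_localInverse hcubed hone
  have hρζ : ρ (ζ ^ 3) = ζ := hcube.localInverse_apply_image hcubed hone
  have hρev : ∀ᶠ u in nhds (ζ ^ 3), (ρ u) ^ 3 = u :=
    (hcube.hasStrictFDerivAt' hcubed hone).eventually_right_inverse
  have hρcont : ∀ᶠ u in nhds (ζ ^ 3), ContinuousAt ρ u := by
    have hmem := (hcube.hasStrictFDerivAt' hcubed hone).image_mem_toOpenPartialHomeomorph_target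
    have hopen := ((hcube.hasStrictFDerivAt' hcubed hone).toOpenPartialHomeomorph _).open_target
    filter_upwards [hopen.mem_nhds hmem] with u hu
    exact (((hcube.hasStrictFDerivAt' hcubed hone).toOpenPartialHomeomorph
      _).continuousOn_symm.continuousAt (hopen.mem_nhds hu))
  set wf : ℂ → ℂ := fun X => ρ (vf X) with hwf
  have hvfζ : vf 0 = ζ ^ 3 := hζ3.symm
  have hwfc : ContDiffAt ℂ 2 wf 0 := by
    refine ContDiffAt.comp (g := ρ) (f := vf) 0 ?_ hvc
    rwa [hvfζ]
  have hwf0 : wf 0 = ζ := by rw [hwf]; simp only; rw [hvfζ, hρζ]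
  have hvten : Filter.Tendsto vf (nhds 0) (nhds (ζ ^ 3)) := by
    have h : Filter.Tendsto vf (nhds 0) (nhds (vf 0)) := hvc.continuousAt
    rwa [hvfζ] at h
  have hw3 : ∀ᶠ X in nhds (0:ℂ), wf X ^ 3 = vf X := hvten.eventually hρev
  have hwcont : ∀ᶠ X in nhds (0:ℂ), ContinuousAt wf X := by
    filter_upwards [hvten.eventually hρcont,
      (hvc.eventually h2top).mono (fun X hX => hX.continuousAt)]
      with X h1 h2
    exact h1.comp h2
  -- Step 4: the scaling map
  set ff : ℂ → ℂ := fun X => X * wf X with hff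
  have hffc : ContDiffAt ℂ 2 ff 0 := contDiffAt_id.mul hwfc
  set eζ : ℂ ≃L[ℂ] ℂ := ContinuousLinearEquiv.unitsEquivAut ℂ (Units.mk0 ζ hζ) with heζ
  have hffd : HasFDerivAt ff ((eζ : ℂ →L[ℂ] ℂ)) 0 := by
    have hwd : HasDerivAt wf (deriv wf 0) 0 :=
      ((hwfc.differentiableAt hone)).hasDerivAt
    have h := (hasDerivAt_id (0:ℂ)).mul hwd
    simp only [one_mul, zero_mul, mul_zero, add_zero, hwf0] at h
    refine h.hasFDerivAt.congr_fderiv ?_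
    refine ContinuousLinearMap.ext fun u => ?_
    simp [heζ, ContinuousLinearEquiv.unitsEquivAut_apply, smul_eq_mul]
  have hstf : HasStrictFDerivAt ff ((eζ : ℂ →L[ℂ] ℂ)) 0 := hffc.hasStrictFDerivAt' hffd hone
  set P2 : OpenPartialHomeomorph ℂ ℂ := hstf.toOpenPartialHomeomorph ff with hP2
  have hP2coe : (P2 : ℂ → ℂ) = ff := rfl
  have hP2src : (0:ℂ) ∈ P2.source := hstf.mem_toOpenPartialHomeomorph_source
  -- Step 5: choose the good open set T
  have hpev : ∀ᶠ X in nhds (0:ℂ), ContinuousAt pf X :=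
    (hpc.eventually h2top).mono (fun X hX => hX.continuousAt)
  have hqev : ∀ᶠ X in nhds (0:ℂ), ContinuousAt qf X :=
    (hqc.eventually h2top).mono (fun X hX => hX.continuousAt)
  have hr0ev : ∀ᶠ X in nhds (0:ℂ), r0f X ≠ 0 :=
    (hr0c.continuousAt).eventually_ne hr00ne
  have hbig : ∀ᶠ X in nhds (0:ℂ),
      ((fun X => X ^ 3 * Af X) X - qf X * E2p X + pf X * qf X * E3p X
          - pf X ^ 2 * qf X * E4 + qf X ^ 2 * E4 = 0)
      ∧ ((fun X => X ^ 2 * Bf X) X - pf X * E2p X + pf X ^ 2 * E3p X - pf X ^ 3 * E4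
          + 2 * pf X * qf X * E4 - qf X * E3p X = 0)
      ∧ r0f X ≠ 0 ∧ wf X ^ 3 = vf X ∧ ContinuousAt pf X ∧ ContinuousAt qf X := by
    filter_upwards [hfeq, hr0ev, hw3, hpev, hqev] with X h1 h2 h3 h4 h5
    exact ⟨h1.2, h1.1, h2, h3, h4, h5⟩
  obtain ⟨T, hTmem, hTopen, hT0⟩ := eventually_nhds_iff.mp hbig
  -- continuity of derived functions on T
  have hpfT : ContinuousOn pf T := fun a ha => ((hTmem a ha).2.2.2.2.1).continuousWithinAt
  have hqfT : ContinuousOn qf T := fun a ha => ((hTmem a ha).2.2.2.2.2).continuousWithinAt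
  have hr1T : ContinuousOn r1f T :=
    (hE3.continuous.continuousOn).sub (hpfT.mul continuousOn_const)
  have hr0T : ContinuousOn r0f T :=
    ((hE2.continuous.continuousOn).sub (hpfT.mul hr1T)).sub (hqfT.mul continuousOn_const)
  -- Step 6: the shear partial homeomorphism
  set P1 : OpenPartialHomeomorph (ℂ × ℂ) (ℂ × ℂ) :=
    { toFun := fun y => (y.1, y.2 + pf y.1 / 2)
      invFun := fun y => (y.1, y.2 - pf y.1 / 2)
      source := T ×ˢ Set.univ
      target := T ×ˢ Set.univ
      map_source' := by rintro ⟨a, b⟩ h; exact ⟨h.1, trivial⟩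
      map_target' := by rintro ⟨a, b⟩ h; exact ⟨h.1, trivial⟩
      left_inv' := by rintro ⟨a, b⟩ _; simp
      right_inv' := by rintro ⟨a, b⟩ _; simp
      open_source := hTopen.prod isOpen_univ
      open_target := hTopen.prod isOpen_univ
      continuousOn_toFun := by
        refine (continuous_fst.continuousOn).prodMk ?_
        refine (continuous_snd.continuousOn).add ?_
        refine ContinuousOn.div_const ?_ 2
        exact hpfT.comp (continuous_fst.continuousOn) (fun y hy => hy.1)
      continuousOn_invFun := by
        refine (continuous_fst.continuousOn).prodMk ?_
        refine (continuous_snd.continuousOn).sub ?_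
        refine ContinuousOn.div_const ?_ 2
        exact hpfT.comp (continuous_fst.continuousOn) (fun y hy => hy.1) } with hP1
  have hP1coe : (P1 : ℂ × ℂ → ℂ × ℂ) = fun y => (y.1, y.2 + pf y.1 / 2) := rfl
  -- product with identity, and composition
  set P2' : OpenPartialHomeomorph (ℂ × ℂ) (ℂ × ℂ) := P2.prod (OpenPartialHomeomorph.refl ℂ) with hP2'
  set P : OpenPartialHomeomorph (ℂ × ℂ) (ℂ × ℂ) := P1.trans P2' with hPdef
  have hPcoe : ∀ y : ℂ × ℂ, P y = (ff y.1, y.2 + pf y.1 / 2) := by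
    intro y
    rw [hPdef, OpenPartialHomeomorph.coe_trans]
    simp [hP2', OpenPartialHomeomorph.prod_apply, hP1coe, hP2coe]
  -- the set where the quadratic cofactor does not vanish
  set θ : ℂ × ℂ → ℂ := fun y => E4 * y.2 ^ 2 + r1f y.1 * y.2 + r0f y.1 with hθ
  have hθcont : ContinuousOn θ (T ×ˢ Set.univ) := by
    have h1 : ContinuousOn (fun y : ℂ × ℂ => r1f y.1) (T ×ˢ Set.univ) :=
      hr1T.comp (continuous_fst.continuousOn) (fun y hy => hy.1)
    have h0 : ContinuousOn (fun y : ℂ × ℂ => r0f y.1) (T ×ˢ Set.univ) :=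
      hr0T.comp (continuous_fst.continuousOn) (fun y hy => hy.1)
    exact ((continuousOn_const.mul ((continuous_snd.continuousOn).pow 2)).add
      (h1.mul (continuous_snd.continuousOn))).add h0
  set W : Set (ℂ × ℂ) := (T ×ˢ Set.univ) ∩ θ ⁻¹' {(0:ℂ)}ᶜ with hW
  have hWopen : IsOpen W := hθcont.isOpen_inter_preimage (hTopen.prod isOpen_univ) isOpen_compl_singleton
  have h0W : (0 : ℂ × ℂ) ∈ W := by
    constructor
    · exact ⟨hT0, trivial⟩
    · simp only [Set.mem_preimage, Set.mem_compl_iff, Set.mem_singleton_iff, hθ]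
      simpa [hp0, hq0] using hr00ne
  -- restrict
  set Ψ : OpenPartialHomeomorph (ℂ × ℂ) (ℂ × ℂ) := P.restrOpen W hWopen with hΨ
  have hΨcoe : ∀ y : ℂ × ℂ, Ψ y = (ff y.1, y.2 + pf y.1 / 2) := hPcoe
  have hΨsrc : Ψ.source = (P1.source ∩ P1 ⁻¹' P2'.source) ∩ W := by
    rw [hΨ, OpenPartialHomeomorph.restrOpen_source, hPdef, OpenPartialHomeomorph.trans_source]
  have h0src : (0 : ℂ × ℂ) ∈ Ψ.source := by
    rw [hΨsrc]
    refine ⟨⟨⟨hT0, trivial⟩, ?_⟩, h0W⟩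
    simp only [Set.mem_preimage, hP1coe]
    constructor
    · simpa [hp0] using hP2src
    · trivial
  have hΨ0 : Ψ (0 : ℂ × ℂ) = 0 := by
    rw [hΨcoe 0]
    simp [hff, hp0]
  refine ⟨Ψ.source, Ψ.target, Ψ.open_source, Ψ.open_target, h0src, ?_, ?_, ?_, ?_⟩
  · have := Ψ.map_source h0src
    rwa [hΨ0] at this
  · exact Ψ.toHomeomorphSourceTarget
  · simp only [OpenPartialHomeomorph.toHomeomorphSourceTarget_apply_coe]
    exact hΨ0
  · rintro ⟨⟨X, Z⟩, hp⟩
    simp only [OpenPartialHomeomorph.toHomeomorphSourceTarget_apply_coe]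
    rw [hΨcoe (X, Z)]
    -- memberships
    rw [hΨsrc] at hp
    obtain ⟨⟨hsrc1, -⟩, hTW, hθne⟩ := hp
    have hXT : X ∈ T := hsrc1.1
    obtain ⟨hFa, hFb, hr0X, hw3X, -, -⟩ := hTmem X hXT
    simp only at hFa hFb
    have hθX : E4 * Z ^ 2 + r1f X * Z + r0f X ≠ 0 := by
      simpa [hθ] using hθne
    -- the factorization of the quartic at X
    have hfact : X ^ 3 * Af X + X ^ 2 * Bf X * Z + E2p X * Z ^ 2 + E3p X * Z ^ 3 + E4 * Z ^ 4
        = (Z ^ 2 + pf X * Z + qf X) * (E4 * Z ^ 2 + r1f X * Z + r0f X) := by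
      simp only [hr1f, hr0f]
      linear_combination Z * hFb + hFa
    -- the quadratic identities
    have hq' : qf X = X ^ 3 * qt X := by
      have e2 : qf X * r0f X = X ^ 3 * Af X := by
        simp only [hr0f, hr1f]
        linear_combination -hFa
      rw [hqt]
      field_simp
      linear_combination e2
    have hp' : pf X = X ^ 2 * pt X := by
      have e1 : pf X * r0f X + qf X * r1f X = X ^ 2 * Bf X := by
        simp only [hr0f, hr1f]
        linear_combination -hFb
      have e2 : qf X * r0f X = X ^ 3 * Af X := by
        simp only [hr0f, hr1f]
        linear_combination -hFa
      rw [hpt, hqt]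
      field_simp
      linear_combination (r0f X) * e1 - (r1f X) * e2
    -- key identity
    have key : (Z + pf X / 2) ^ 2 + (ff X) ^ 3 = Z ^ 2 + pf X * Z + qf X := by
      have hvfX : vf X = qt X - X * pt X ^ 2 / 4 := rfl
      have hffX : ff X = X * wf X := rfl
      rw [hffX]
      have : (X * wf X) ^ 3 = X ^ 3 * vf X := by
        rw [mul_pow, hw3X]
      rw [this, hvfX]
      linear_combination - hq' + ((pf X + X ^ 2 * pt X) / 4) * hp'
    constructor
    · intro h0
      rw [hfact] at h0
      rcases mul_eq_zero.mp h0 with h | h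
      · simp only
        rw [key]
        exact h
      · exact absurd h hθX
    · intro h0
      simp only at h0
      rw [key] at h0
      rw [hfact, h0, zero_mul]

set_option maxHeartbeats 1600000 in
theorem stmt12 (a₁ a₀ c₂ c₃ c₄ b₀ : ℂ) (hc₂ : c₂ ≠ 0)
    (f₂ f₃ g : MvPolynomial (Fin 2) ℂ)
    (hf₂ : f₂ = x ^ 2 + C a₁ * x * z + C a₀ * z ^ 2)
    (hf₃ : f₃ = x ^ 3 + C c₂ * z ^ 2 + C c₃ * x ^ 2 * z + C c₄ * x * z ^ 2
            + C b₀ * z ^ 3)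
    (hg : z ^ 2 * g = f₂ ^ 3 - f₃ ^ 2) :
    (∀ d : Fin 2 →₀ ℕ,
        coeff d (g - (-(C (c₂ ^ 2)) * z ^ 2 - C (2 * c₂) * x ^ 3)) ≠ 0 →
        2 * d 0 + 3 * d 1 > 6) ∧
    GermTopEquiv (fun p => eval ![p.1, p.2] g) (fun p => p.2 ^ 2 + p.1 ^ 3) := by
  -- first, identify g explicitly
  have hrel : f₂ ^ 3 - f₃ ^ 2
      = z ^ 2 * Epoly a₁ a₀ c₂ c₃ c₄ b₀ + (3 * C a₁ - 2 * C c₃) * x ^ 5 * z := by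
    rw [hf₂, hf₃, Epoly]; ring
  have hs : z ^ 2 * (g - Epoly a₁ a₀ c₂ c₃ c₄ b₀) = (3 * C a₁ - 2 * C c₃) * x ^ 5 * z := by
    rw [mul_sub, hg, hrel]; ring
  have hgE : g = Epoly a₁ a₀ c₂ c₃ c₄ b₀ := by
    have h2 : 3 * a₁ - 2 * c₃ = 0 := by
      have h := congrArg (fun P => eval ![(1:ℂ), 0] (pderiv 1 P)) hs
      simpa [x, z, pderiv_mul] using h.symm
    have h3 : (3 * C a₁ - 2 * C c₃ : MvPolynomial (Fin 2) ℂ) = 0 := by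
      have h4 : ((C (3 * a₁ - 2 * c₃)) : MvPolynomial (Fin 2) ℂ) = C 0 := by rw [h2]
      rw [← C_0, ← h4]; simp [map_sub, map_mul, map_ofNat]
    rw [h3, zero_mul, zero_mul] at hs
    have hz : (z : MvPolynomial (Fin 2) ℂ) ^ 2 ≠ 0 := pow_ne_zero _ (by simp [z, X_ne_zero])
    rcases mul_eq_zero.1 hs with h' | h'
    · exact absurd h' hz
    · exact sub_eq_zero.mp h'
  constructor
  · -- Part 1
    intro d hne
    by_contra h
    apply hne
    have key : ∀ (c : ℂ) (a b : ℕ), 6 < 2 * a + 3 * b → coeff d (C c * x ^ a * z ^ b) = 0 := by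
      intro c a b hab
      rw [coeff_Cxz]
      exact if_neg (by omega)
    have hD : g - (-(C (c₂ ^ 2)) * z ^ 2 - C (2 * c₂) * x ^ 3)
        = C (-2 * c₂ * b₀) * x ^ 0 * z ^ 3
        + C (a₀ ^ 3 - b₀ ^ 2) * x ^ 0 * z ^ 4
        + C (-2 * c₂ * c₄) * x ^ 1 * z ^ 2
        + C (-2 * c₄ * b₀ + 3 * a₁ * a₀ ^ 2) * x ^ 1 * z ^ 3
        + C (-2 * c₂ * c₃) * x ^ 2 * z ^ 1
        + C (-c₄ ^ 2 - 2 * c₃ * b₀ + 3 * a₀ ^ 2 + 3 * a₁ ^ 2 * a₀) * x ^ 2 * z ^ 2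
        + C (-2 * b₀ - 2 * c₃ * c₄ + 6 * a₁ * a₀ + a₁ ^ 3) * x ^ 3 * z ^ 1
        + C (-2 * c₄ - c₃ ^ 2 + 3 * a₀ + 3 * a₁ ^ 2) * x ^ 4 * z ^ 0 := by
      rw [hgE, Epoly]
      simp only [map_mul, map_neg, map_add, map_sub, map_pow, map_ofNat]
      ring
    rw [hD]
    simp only [coeff_add]
    rw [key _ 0 3 (by norm_num), key _ 0 4 (by norm_num), key _ 1 2 (by norm_num),
      key _ 1 3 (by norm_num), key _ 2 1 (by norm_num), key _ 2 2 (by norm_num),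
      key _ 3 1 (by norm_num), key _ 4 0 (by norm_num)]
    norm_num
  · -- Part 2
    have hfun : (fun p : ℂ × ℂ => eval ![p.1, p.2] g)
        = (fun p : ℂ × ℂ =>
            (fun X : ℂ => X ^ 3 * (-2 * c₂ + (-2 * c₄ - c₃ ^ 2 + 3 * a₀ + 3 * a₁ ^ 2) * X)) p.1
            + (fun X : ℂ => X ^ 2 * (-2 * c₂ * c₃
                + (-2 * b₀ - 2 * c₃ * c₄ + 6 * a₁ * a₀ + a₁ ^ 3) * X)) p.1 * p.2
            + (fun X : ℂ => -c₂ ^ 2 - 2 * c₂ * c₄ * X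
                + (-c₄ ^ 2 - 2 * c₃ * b₀ + 3 * a₀ ^ 2 + 3 * a₁ ^ 2 * a₀) * X ^ 2) p.1 * p.2 ^ 2
            + (fun X : ℂ => -2 * c₂ * b₀ + (-2 * c₄ * b₀ + 3 * a₁ * a₀ ^ 2) * X) p.1 * p.2 ^ 3
            + (a₀ ^ 3 - b₀ ^ 2) * p.2 ^ 4) := by
      funext p
      rw [hgE, Epoly]
      simp [x, z]
      ring
    rw [hfun]
    refine cusp_germ
      (fun X : ℂ => X ^ 3 * (-2 * c₂ + (-2 * c₄ - c₃ ^ 2 + 3 * a₀ + 3 * a₁ ^ 2) * X))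
      (fun X : ℂ => X ^ 2 * (-2 * c₂ * c₃ + (-2 * b₀ - 2 * c₃ * c₄ + 6 * a₁ * a₀ + a₁ ^ 3) * X))
      (fun X : ℂ => -c₂ ^ 2 - 2 * c₂ * c₄ * X
        + (-c₄ ^ 2 - 2 * c₃ * b₀ + 3 * a₀ ^ 2 + 3 * a₁ ^ 2 * a₀) * X ^ 2)
      (fun X : ℂ => -2 * c₂ * b₀ + (-2 * c₄ * b₀ + 3 * a₁ * a₀ ^ 2) * X)
      (a₀ ^ 3 - b₀ ^ 2)
      (fun X : ℂ => -2 * c₂ + (-2 * c₄ - c₃ ^ 2 + 3 * a₀ + 3 * a₁ ^ 2) * X)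
      (fun X : ℂ => -2 * c₂ * c₃ + (-2 * b₀ - 2 * c₃ * c₄ + 6 * a₁ * a₀ + a₁ ^ 3) * X)
      ?_ ?_ ?_ ?_ (fun X => rfl) (fun X => rfl) ?_ ?_
    · -- ContDiff E2p
      exact (contDiff_const.sub (contDiff_const.mul contDiff_id)).add
        (contDiff_const.mul (contDiff_id.pow 2))
    · -- ContDiff E3p
      exact contDiff_const.add (contDiff_const.mul contDiff_id)
    · -- ContDiff Af
      exact contDiff_const.add (contDiff_const.mul contDiff_id)
    · -- ContDiff Bf
      exact contDiff_const.add (contDiff_const.mul contDiff_id)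
    · -- Af 0 ≠ 0
      simpa using hc₂
    · -- E2p 0 ≠ 0
      simpa using pow_ne_zero 2 hc₂
end
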